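/- Let S ⊂ ℙ⁴ be a Segre quartic surface (degree-4 complete intersection of two quadrics with only rational double points, anticanonically embedded). Then no 2-plane P ⊂ ℙ⁴ contains a curve on S of degree greater than 2. -/

import Mathlib

open MvPolynomial

/-- If a homogeneous polynomial of degree `2` is divisible by a homogeneous
polynomial of degree `d > 2`, it must vanish. -/
lemma aux_dvd_zero {f r : MvPolynomial (Fin 3) ℂ} {d : ℕ}
    (hr : r.IsHomogeneous 2) (hd : 2 < d) (hfh : f.IsHomogeneous d)
    (hdvd : f ∣ r) : r = 0 := by
  obtain ⟨s, rfl⟩ := hdvd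
  have h1 : f * s = homogeneousComponent 2 (f * s) := by
    rw [homogeneousComponent_of_mem ((mem_homogeneousSubmodule _ _).2 hr)]
    rw [if_pos rfl]
  rw [h1]
  conv_lhs => rw [← sum_homogeneousComponent s]
  rw [Finset.mul_sum, map_sum]
  apply Finset.sum_eq_zero
  intro i _
  have hmem : f * homogeneousComponent i s ∈
      homogeneousSubmodule (Fin 3) ℂ (d + i) :=
    (mem_homogeneousSubmodule _ _).2
      (hfh.mul (homogeneousComponent_isHomogeneous i s))
  rw [homogeneousComponent_of_mem hmem, if_neg (by omega)]

/-- Let S ⊂ ℙ⁴ be a Segre quartic surface, realized (via its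
affine cone in ℂ⁵) as the common zero locus of two homogeneous quadrics
q₁, q₂, irreducible, nondegenerate (contained in no hyperplane), and carrying
only finitely many lines (lines correspond to 2-dimensional linear subspaces
whose cone lies in S).  Then no 2-plane P ⊂ ℙ⁴ (the projectivization of a
3-dimensional subspace, parametrized by an injective linear map
u : ℂ³ → ℂ⁵) contains a curve on S of degree greater than 2 (i.e. the zero
cone, inside P, of an irreducible homogeneous polynomial f of degree d > 2
in the coordinates of P). -/
theorem stmt18 (q₁ q₂ : MvPolynomial (Fin 5) ℂ)
    (hq₁ : q₁.IsHomogeneous 2) (hq₂ : q₂.IsHomogeneous 2)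
    (S : Set (Fin 5 → ℂ))
    (hS : S = {x | eval x q₁ = 0 ∧ eval x q₂ = 0})
    (hirr : IsIrreducible S)
    (hnondeg : ¬ ∃ φ : (Fin 5 → ℂ) →ₗ[ℂ] ℂ, φ ≠ 0 ∧ ∀ x ∈ S, φ x = 0)
    (hfinlines : {W : Submodule ℂ (Fin 5 → ℂ) |
      Module.finrank ℂ W = 2 ∧ (W : Set (Fin 5 → ℂ)) ⊆ S}.Finite) :
    ¬ ∃ (u : (Fin 3 → ℂ) →ₗ[ℂ] (Fin 5 → ℂ)) (f : MvPolynomial (Fin 3) ℂ)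
        (d : ℕ),
      Function.Injective u ∧ Irreducible f ∧ f.IsHomogeneous d ∧ 2 < d ∧
        u '' {y | eval y f = 0} ⊆ S := by
  rintro ⟨u, f, d, hu, hfirr, hfh, hd, hsub⟩
  classical
  -- the linear substitution polynomials corresponding to `u`
  set g : Fin 5 → MvPolynomial (Fin 3) ℂ :=
    fun i => ∑ j, C (u (Pi.single j 1) i) * X j with hgdef
  have hgh : ∀ i, (g i).IsHomogeneous 1 := by
    intro i
    apply IsHomogeneous.sum
    intro j _
    exact (isHomogeneous_X _ _).C_mul _
  have hrep : ∀ y : Fin 3 → ℂ, u y = ∑ j, y j • u (Pi.single j 1) := by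
    intro y
    have hy : y = ∑ j, y j • (Pi.single j 1 : Fin 3 → ℂ) := by
      funext k
      simp [Finset.sum_apply, Pi.single_apply]
    conv_lhs => rw [hy]
    simp [map_sum, map_smul]
  have heval : ∀ (q : MvPolynomial (Fin 5) ℂ) (y : Fin 3 → ℂ),
      eval y (aeval g q) = eval (u y) q := by
    intro q y
    rw [aeval_def, eval₂_comp_left (eval y)]
    have h1 : (eval y).comp (algebraMap ℂ (MvPolynomial (Fin 3) ℂ)) =
        RingHom.id ℂ := by
      ext r
      simp [algebraMap_eq]
    have h2 : (eval y) ∘ g = u y := by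
      funext i
      rw [hrep y]
      simp [hgdef, Finset.sum_apply, mul_comm]
    rw [h1, h2]
    rfl
  -- any quadric vanishing on the curve vanishes on the whole plane
  have main : ∀ q : MvPolynomial (Fin 5) ℂ, q.IsHomogeneous 2 →
      (∀ y : Fin 3 → ℂ, eval y f = 0 → eval (u y) q = 0) →
      ∀ y : Fin 3 → ℂ, eval (u y) q = 0 := by
    intro q hq hvan y
    have hrh : (aeval g q).IsHomogeneous 2 := by
      simpa using hq.aeval g hgh
    have hrmem : aeval g q ∈ vanishingIdeal ℂ (zeroLocus ℂ (Ideal.span {f})) := by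
      intro x hx
      have hfx : eval x f = 0 := hx f (Ideal.subset_span rfl)
      change eval x (aeval g q) = 0
      rw [heval]
      exact hvan x hfx
    rw [vanishingIdeal_zeroLocus_eq_radical] at hrmem
    have hfprime : Prime f := UniqueFactorizationMonoid.irreducible_iff_prime.mp hfirr
    have hprime : (Ideal.span ({f} : Set (MvPolynomial (Fin 3) ℂ))).IsPrime :=
      (Ideal.span_singleton_prime hfirr.ne_zero).2 hfprime
    rw [hprime.radical] at hrmem
    have hdvd : f ∣ aeval g q := Ideal.mem_span_singleton.mp hrmem
    have hzero : aeval g q = 0 := aux_dvd_zero hrh hd hfh hdvd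
    rw [← heval q y, hzero, map_zero]
  have hvan₁ : ∀ y : Fin 3 → ℂ, eval y f = 0 → eval (u y) q₁ = 0 := by
    intro y hy
    have : u y ∈ S := hsub ⟨y, hy, rfl⟩
    rw [hS] at this
    exact this.1
  have hvan₂ : ∀ y : Fin 3 → ℂ, eval y f = 0 → eval (u y) q₂ = 0 := by
    intro y hy
    have : u y ∈ S := hsub ⟨y, hy, rfl⟩
    rw [hS] at this
    exact this.2
  -- the whole plane lies in S
  have hplane : ∀ y : Fin 3 → ℂ, u y ∈ S := by
    intro y
    rw [hS]
    exact ⟨main q₁ hq₁ hvan₁ y, main q₂ hq₂ hvan₂ y⟩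
  -- construct infinitely many lines in S
  set v : ℂ → (Fin 3 → ℂ) := fun c => ![1, 0, c] with hvdef
  set w : Fin 3 → ℂ := ![0, 1, 0] with hwdef
  have hli : ∀ c : ℂ, LinearIndependent ℂ ![v c, w] := by
    intro c
    rw [linearIndependent_fin2]
    constructor
    · intro h
      have := congrFun h 1
      simp [hvdef, hwdef] at this
    · intro a h
      have := congrFun h 0
      simp [hvdef, hwdef] at this
  set V : ℂ → Submodule ℂ (Fin 3 → ℂ) :=
    fun c => Submodule.span ℂ (Set.range ![v c, w]) with hVdef
  set W : ℂ → Submodule ℂ (Fin 5 → ℂ) := fun c => Submodule.map u (V c) with hWdef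
  have hrank : ∀ c : ℂ, Module.finrank ℂ (W c) = 2 := by
    intro c
    rw [hWdef]
    rw [← (Submodule.equivMapOfInjective u hu (V c)).finrank_eq]
    rw [hVdef, finrank_span_eq_card (hli c)]
    simp
  have hsubS : ∀ c : ℂ, ((W c : Submodule ℂ (Fin 5 → ℂ)) : Set (Fin 5 → ℂ)) ⊆ S := by
    intro c x hx
    obtain ⟨y, -, rfl⟩ := hx
    exact hplane y
  have hWinj : Function.Injective W := by
    intro c c' h
    have hV : V c = V c' := Submodule.map_injective_of_injective hu h
    have hmem : v c ∈ V c' := by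
      rw [← hV]
      exact Submodule.subset_span ⟨0, rfl⟩
    rw [hVdef, Submodule.mem_span_range_iff_exists_fun] at hmem
    obtain ⟨a, hab⟩ := hmem
    rw [Fin.sum_univ_two] at hab
    have h0 := congrFun hab 0
    have h2 := congrFun hab 2
    simp [hvdef, hwdef] at h0 h2
    rw [h0] at h2
    simpa using h2.symm
  have hinf : {W : Submodule ℂ (Fin 5 → ℂ) |
      Module.finrank ℂ W = 2 ∧ (W : Set (Fin 5 → ℂ)) ⊆ S}.Infinite :=
    Set.infinite_of_injective_forall_mem hWinj (fun c => ⟨hrank c, hsubS c⟩)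
  exact hinf hfinlines
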